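/- Fix l_B > 0, integers k₁, k₂, k₃, and let G = U(1)⋉𝔼². With representatives z ∈ [0,1) and θ ∈ [0,2π), set A(g₁,g₂) = (r₁ × R_{θ₁} r₂)/(2 l_B²), c₁(g₁,g₂) = z₁ + z₂ + A(g₁,g₂) − z₁₂, c₂(g₁,g₂) = (θ₁ + θ₂ − θ₁₂)/(2π), and suppose λ : G³ → ℝ satisfies (dλ)(g₁,g₂,g₃,g₄) = A(g₁,g₂)·A(g₃,g₄) for all g_i ∈ G. Define the 3-cochain f(g₁,g₂,g₃) = k₁·(z₁ c₁(g₂,g₃) + A(g₁,g₂) z₃ + λ(g₁,g₂,g₃)) + k₂·(θ₁/2π)·c₁(g₂,g₃) + k₃·(θ₁/2π)·c₂(g₂,g₃). Then (df)(g₁,g₂,g₃,g₄) = k₁ c₁(g₁,g₂) c₁(g₃,g₄) + k₂ c₂(g₁,g₂) c₁(g₃,g₄) + k₃ c₂(g₁,g₂) c₂(g₃,g₄), which is an integer; consequently f reduced modulo 1 is an (ℝ/ℤ)-valued 3-cocycle on U(1)⋉𝔼². -/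

import Mathlib

noncomputable section

/-- The cross product of plane vectors. -/
def crossR (r r' : Fin 2 → ℝ) : ℝ := r 0 * r' 1 - r 1 * r' 0

/-- Rotation of the plane by the angle `θ`. -/
def rotAngle (θ : Real.Angle) (r : Fin 2 → ℝ) : Fin 2 → ℝ :=
  ![θ.cos * r 0 - θ.sin * r 1, θ.sin * r 0 + θ.cos * r 1]

/-- The underlying set of the continuum magnetic Euclidean group `U(1)⋉𝔼²`. -/
abbrev MagEuc : Type := AddCircle (1 : ℝ) × (Fin 2 → ℝ) × Real.Angle

/-- The continuum magnetic Euclidean group multiplication. -/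
def magEucMul (lB : ℝ) (g₁ g₂ : MagEuc) : MagEuc :=
  (g₁.1 + g₂.1 +
      (↑((crossR g₁.2.1 (rotAngle g₁.2.2 g₂.2.1) / (2 * lB ^ 2) : ℝ)) : AddCircle (1 : ℝ)),
    g₁.2.1 + rotAngle g₁.2.2 g₂.2.1,
    g₁.2.2 + g₂.2.2)

/-- The representative in `[0,1)` of an element of `ℝ/ℤ`. -/
def rep1 (z : AddCircle (1 : ℝ)) : ℝ :=
  haveI : Fact ((0 : ℝ) < 1) := ⟨one_pos⟩
  (AddCircle.equivIco 1 0 z : ℝ)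

/-- The representative in `[0,2π)` of an angle. -/
def repAngle (θ : Real.Angle) : ℝ :=
  if θ.toReal < 0 then θ.toReal + 2 * Real.pi else θ.toReal

/-- The magnetic area 2-cochain `A(g₁,g₂) = (r₁ × R_{θ₁} r₂)/(2 l_B²)`. -/
def areaC (lB : ℝ) (g₁ g₂ : MagEuc) : ℝ :=
  crossR g₁.2.1 (rotAngle g₁.2.2 g₂.2.1) / (2 * lB ^ 2)

/-- The charge cocycle `c₁(g₁,g₂) = z₁ + z₂ + A(g₁,g₂) − z₁₂`. -/
def cOne (lB : ℝ) (g₁ g₂ : MagEuc) : ℝ :=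
  rep1 g₁.1 + rep1 g₂.1 + areaC lB g₁ g₂ - rep1 (magEucMul lB g₁ g₂).1

/-- The rotation cocycle `c₂(g₁,g₂) = (θ₁ + θ₂ − θ₁₂)/(2π)`. -/
def cTwo (lB : ℝ) (g₁ g₂ : MagEuc) : ℝ :=
  (repAngle g₁.2.2 + repAngle g₂.2.2 - repAngle (magEucMul lB g₁ g₂).2.2) / (2 * Real.pi)

lemma rotAngle_add (θ₁ θ₂ : Real.Angle) (r : Fin 2 → ℝ) :
    rotAngle (θ₁ + θ₂) r = rotAngle θ₁ (rotAngle θ₂ r) := by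
  funext i
  fin_cases i <;>
  · simp [rotAngle, Real.Angle.cos_add, Real.Angle.sin_add]
    ring

lemma rotAngle_vadd (θ : Real.Angle) (r r' : Fin 2 → ℝ) :
    rotAngle θ (r + r') = rotAngle θ r + rotAngle θ r' := by
  funext i
  fin_cases i <;>
  · simp [rotAngle]
    ring

lemma crossR_rot (θ : Real.Angle) (r r' : Fin 2 → ℝ) :
    crossR (rotAngle θ r) (rotAngle θ r') = crossR r r' := by
  have h := θ.cos_sq_add_sin_sq
  simp only [crossR, rotAngle, Matrix.cons_val_zero, Matrix.cons_val_one, Matrix.head_cons]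
  linear_combination (r 0 * r' 1 - r 1 * r' 0) * h

lemma crossR_add_left (r r' s : Fin 2 → ℝ) :
    crossR (r + r') s = crossR r s + crossR r' s := by
  simp only [crossR, Pi.add_apply]; ring

lemma crossR_add_right (r s s' : Fin 2 → ℝ) :
    crossR r (s + s') = crossR r s + crossR r s' := by
  simp only [crossR, Pi.add_apply]; ring

lemma areaC_cocycle (lB : ℝ) (g₁ g₂ g₃ : MagEuc) :
    areaC lB g₂ g₃ - areaC lB (magEucMul lB g₁ g₂) g₃ + areaC lB g₁ (magEucMul lB g₂ g₃)
      - areaC lB g₁ g₂ = 0 := by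
  simp only [areaC, magEucMul, rotAngle_add, rotAngle_vadd, crossR_add_left, crossR_add_right,
    crossR_rot]
  ring
lemma magEucMul_assoc (lB : ℝ) (g₁ g₂ g₃ : MagEuc) :
    magEucMul lB (magEucMul lB g₁ g₂) g₃ = magEucMul lB g₁ (magEucMul lB g₂ g₃) := by
  have h := areaC_cocycle lB g₁ g₂ g₃
  have e : areaC lB g₁ g₂ + areaC lB (magEucMul lB g₁ g₂) g₃ =
      areaC lB g₂ g₃ + areaC lB g₁ (magEucMul lB g₂ g₃) := by linarith
  refine Prod.ext ?_ (Prod.ext ?_ ?_)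
  · show g₁.1 + g₂.1 + (↑(areaC lB g₁ g₂) : AddCircle (1:ℝ)) + g₃.1 +
        (↑(areaC lB (magEucMul lB g₁ g₂) g₃) : AddCircle (1:ℝ)) =
      g₁.1 + (g₂.1 + g₃.1 + (↑(areaC lB g₂ g₃) : AddCircle (1:ℝ))) +
        (↑(areaC lB g₁ (magEucMul lB g₂ g₃)) : AddCircle (1:ℝ))
    have key : (↑(areaC lB g₁ g₂) : AddCircle (1:ℝ)) + ↑(areaC lB (magEucMul lB g₁ g₂) g₃) =
        (↑(areaC lB g₂ g₃) : AddCircle (1:ℝ)) + ↑(areaC lB g₁ (magEucMul lB g₂ g₃)) := by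
      rw [← AddCircle.coe_add, ← AddCircle.coe_add, e]
    calc g₁.1 + g₂.1 + (↑(areaC lB g₁ g₂) : AddCircle (1:ℝ)) + g₃.1 +
          (↑(areaC lB (magEucMul lB g₁ g₂) g₃) : AddCircle (1:ℝ))
        = g₁.1 + g₂.1 + g₃.1 + ((↑(areaC lB g₁ g₂) : AddCircle (1:ℝ)) +
          ↑(areaC lB (magEucMul lB g₁ g₂) g₃)) := by abel
      _ = g₁.1 + g₂.1 + g₃.1 + ((↑(areaC lB g₂ g₃) : AddCircle (1:ℝ)) +
          ↑(areaC lB g₁ (magEucMul lB g₂ g₃))) := by rw [key]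
      _ = g₁.1 + (g₂.1 + g₃.1 + (↑(areaC lB g₂ g₃) : AddCircle (1:ℝ))) +
          (↑(areaC lB g₁ (magEucMul lB g₂ g₃)) : AddCircle (1:ℝ)) := by abel
  · show g₁.2.1 + rotAngle g₁.2.2 g₂.2.1 + rotAngle (g₁.2.2 + g₂.2.2) g₃.2.1 =
        g₁.2.1 + rotAngle g₁.2.2 (g₂.2.1 + rotAngle g₂.2.2 g₃.2.1)
    rw [rotAngle_add, rotAngle_vadd, add_assoc]
  · show g₁.2.2 + g₂.2.2 + g₃.2.2 = g₁.2.2 + (g₂.2.2 + g₃.2.2)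
    rw [add_assoc]

lemma cOne_cocycle (lB : ℝ) (g₁ g₂ g₃ : MagEuc) :
    cOne lB g₂ g₃ - cOne lB (magEucMul lB g₁ g₂) g₃ + cOne lB g₁ (magEucMul lB g₂ g₃)
      - cOne lB g₁ g₂ = 0 := by
  have h := areaC_cocycle lB g₁ g₂ g₃
  simp only [cOne, magEucMul_assoc]
  linarith

lemma cTwo_cocycle (lB : ℝ) (g₁ g₂ g₃ : MagEuc) :
    cTwo lB g₂ g₃ - cTwo lB (magEucMul lB g₁ g₂) g₃ + cTwo lB g₁ (magEucMul lB g₂ g₃)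
      - cTwo lB g₁ g₂ = 0 := by
  simp only [cTwo, magEucMul_assoc]
  ring

lemma rep1_coe (z : AddCircle (1 : ℝ)) : ((rep1 z : ℝ) : AddCircle (1 : ℝ)) = z :=
  haveI : Fact ((0 : ℝ) < 1) := ⟨one_pos⟩
  (AddCircle.equivIco 1 0).symm_apply_apply z

lemma repAngle_coe (θ : Real.Angle) : ((repAngle θ : ℝ) : Real.Angle) = θ := by
  unfold repAngle
  split_ifs
  · rw [Real.Angle.coe_add, Real.Angle.coe_two_pi, add_zero, θ.coe_toReal]
  · exact θ.coe_toReal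

lemma cOne_int (lB : ℝ) (g₁ g₂ : MagEuc) : ∃ n : ℤ, cOne lB g₁ g₂ = n := by
  have h : ((cOne lB g₁ g₂ : ℝ) : AddCircle (1:ℝ)) = 0 := by
    have : (magEucMul lB g₁ g₂).1 = g₁.1 + g₂.1 + ((areaC lB g₁ g₂ : ℝ) : AddCircle (1:ℝ)) := rfl
    rw [cOne]
    push_cast [AddCircle.coe_sub, AddCircle.coe_add]
    rw [rep1_coe, rep1_coe, rep1_coe, this]
    abel
  obtain ⟨n, hn⟩ := (AddCircle.coe_eq_zero_iff _).mp h
  exact ⟨n, by rw [← hn]; simp⟩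

lemma cTwo_int (lB : ℝ) (g₁ g₂ : MagEuc) : ∃ n : ℤ, cTwo lB g₁ g₂ = n := by
  have h : (((repAngle g₁.2.2 + repAngle g₂.2.2 - repAngle (magEucMul lB g₁ g₂).2.2 : ℝ)) :
      Real.Angle) = 0 := by
    have : (magEucMul lB g₁ g₂).2.2 = g₁.2.2 + g₂.2.2 := rfl
    rw [Real.Angle.coe_sub, Real.Angle.coe_add, repAngle_coe, repAngle_coe, repAngle_coe, this]
    abel
  obtain ⟨n, hn⟩ := (AddCircle.coe_eq_zero_iff _).mp h
  refine ⟨n, ?_⟩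
  rw [cTwo, ← hn]
  have hπ : (2 * Real.pi) ≠ 0 := by positivity
  field_simp
  rw [zsmul_eq_mul]; ring

/-- The SPT 3-cochain with levels `k₁` (IQH), `k₂` (shift) and `k₃` (rotation). -/
def sptEuc (lB : ℝ) (k₁ k₂ k₃ : ℤ) (lam : MagEuc → MagEuc → MagEuc → ℝ)
    (g₁ g₂ g₃ : MagEuc) : ℝ :=
  (k₁ : ℝ) * (rep1 g₁.1 * cOne lB g₂ g₃ + areaC lB g₁ g₂ * rep1 g₃.1 + lam g₁ g₂ g₃) +
    (k₂ : ℝ) * (repAngle g₁.2.2 / (2 * Real.pi)) * cOne lB g₂ g₃ +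
    (k₃ : ℝ) * (repAngle g₁.2.2 / (2 * Real.pi)) * cTwo lB g₂ g₃

/-- The coboundary of the continuum SPT 3-cochain is the integral 4-cocycle
`k₁ c₁c₁ + k₂ c₂c₁ + k₃ c₂c₂`; hence the cochain reduced mod 1 is an `(ℝ/ℤ)`-valued
3-cocycle on `U(1)⋉𝔼²`, realizing the `ℤ³` SPT classification. -/
theorem continuum_spt_cocycles (lB : ℝ) (hlB : 0 < lB) (k₁ k₂ k₃ : ℤ)
    (lam : MagEuc → MagEuc → MagEuc → ℝ)
    (hlam : ∀ g₁ g₂ g₃ g₄ : MagEuc,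
      lam g₂ g₃ g₄ - lam (magEucMul lB g₁ g₂) g₃ g₄ + lam g₁ (magEucMul lB g₂ g₃) g₄ -
          lam g₁ g₂ (magEucMul lB g₃ g₄) + lam g₁ g₂ g₃ = areaC lB g₁ g₂ * areaC lB g₃ g₄) :
    (∀ g₁ g₂ g₃ g₄ : MagEuc,
      sptEuc lB k₁ k₂ k₃ lam g₂ g₃ g₄ - sptEuc lB k₁ k₂ k₃ lam (magEucMul lB g₁ g₂) g₃ g₄ +
          sptEuc lB k₁ k₂ k₃ lam g₁ (magEucMul lB g₂ g₃) g₄ -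
          sptEuc lB k₁ k₂ k₃ lam g₁ g₂ (magEucMul lB g₃ g₄) +
          sptEuc lB k₁ k₂ k₃ lam g₁ g₂ g₃ =
        (k₁ : ℝ) * cOne lB g₁ g₂ * cOne lB g₃ g₄ + (k₂ : ℝ) * cTwo lB g₁ g₂ * cOne lB g₃ g₄ +
          (k₃ : ℝ) * cTwo lB g₁ g₂ * cTwo lB g₃ g₄) ∧
    (∀ g₁ g₂ g₃ g₄ : MagEuc, ∃ N : ℤ,
      (k₁ : ℝ) * cOne lB g₁ g₂ * cOne lB g₃ g₄ + (k₂ : ℝ) * cTwo lB g₁ g₂ * cOne lB g₃ g₄ +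
        (k₃ : ℝ) * cTwo lB g₁ g₂ * cTwo lB g₃ g₄ = N) ∧
    (∀ g₁ g₂ g₃ g₄ : MagEuc,
      (↑(sptEuc lB k₁ k₂ k₃ lam g₂ g₃ g₄) : AddCircle (1 : ℝ)) -
          ↑(sptEuc lB k₁ k₂ k₃ lam (magEucMul lB g₁ g₂) g₃ g₄) +
          ↑(sptEuc lB k₁ k₂ k₃ lam g₁ (magEucMul lB g₂ g₃) g₄) -
          ↑(sptEuc lB k₁ k₂ k₃ lam g₁ g₂ (magEucMul lB g₃ g₄)) +
          ↑(sptEuc lB k₁ k₂ k₃ lam g₁ g₂ g₃) = 0) := by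
  have p1 : ∀ g₁ g₂ g₃ g₄ : MagEuc,
      sptEuc lB k₁ k₂ k₃ lam g₂ g₃ g₄ - sptEuc lB k₁ k₂ k₃ lam (magEucMul lB g₁ g₂) g₃ g₄ +
          sptEuc lB k₁ k₂ k₃ lam g₁ (magEucMul lB g₂ g₃) g₄ -
          sptEuc lB k₁ k₂ k₃ lam g₁ g₂ (magEucMul lB g₃ g₄) +
          sptEuc lB k₁ k₂ k₃ lam g₁ g₂ g₃ =
        (k₁ : ℝ) * cOne lB g₁ g₂ * cOne lB g₃ g₄ + (k₂ : ℝ) * cTwo lB g₁ g₂ * cOne lB g₃ g₄ +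
          (k₃ : ℝ) * cTwo lB g₁ g₂ * cTwo lB g₃ g₄ := by
    intro g₁ g₂ g₃ g₄
    have h4 := hlam g₁ g₂ g₃ g₄
    have hA123 := areaC_cocycle lB g₁ g₂ g₃
    have hA234 := areaC_cocycle lB g₂ g₃ g₄
    simp only [sptEuc, cOne, cTwo, magEucMul_assoc]
    linear_combination (k₁ : ℝ) * h4 + (k₁ : ℝ) * rep1 g₄.1 * hA123 +
      (-((k₁ : ℝ) * rep1 g₁.1) - (k₂ : ℝ) * (repAngle g₁.2.2 / (2 * Real.pi))) * hA234
  have p2 : ∀ g₁ g₂ g₃ g₄ : MagEuc, ∃ N : ℤ,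
      (k₁ : ℝ) * cOne lB g₁ g₂ * cOne lB g₃ g₄ + (k₂ : ℝ) * cTwo lB g₁ g₂ * cOne lB g₃ g₄ +
        (k₃ : ℝ) * cTwo lB g₁ g₂ * cTwo lB g₃ g₄ = N := by
    intro g₁ g₂ g₃ g₄
    obtain ⟨n₁, hn₁⟩ := cOne_int lB g₁ g₂
    obtain ⟨n₂, hn₂⟩ := cTwo_int lB g₁ g₂
    obtain ⟨m₁, hm₁⟩ := cOne_int lB g₃ g₄
    obtain ⟨m₂, hm₂⟩ := cTwo_int lB g₃ g₄
    exact ⟨k₁ * n₁ * m₁ + k₂ * n₂ * m₁ + k₃ * n₂ * m₂, by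
      rw [hn₁, hn₂, hm₁, hm₂]; push_cast; ring⟩
  refine ⟨p1, p2, ?_⟩
  intro g₁ g₂ g₃ g₄
  obtain ⟨N, hN⟩ := p2 g₁ g₂ g₃ g₄
  have key : (↑(sptEuc lB k₁ k₂ k₃ lam g₂ g₃ g₄) : AddCircle (1 : ℝ)) -
      ↑(sptEuc lB k₁ k₂ k₃ lam (magEucMul lB g₁ g₂) g₃ g₄) +
      ↑(sptEuc lB k₁ k₂ k₃ lam g₁ (magEucMul lB g₂ g₃) g₄) -
      ↑(sptEuc lB k₁ k₂ k₃ lam g₁ g₂ (magEucMul lB g₃ g₄)) +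
      ↑(sptEuc lB k₁ k₂ k₃ lam g₁ g₂ g₃) =
      ↑(sptEuc lB k₁ k₂ k₃ lam g₂ g₃ g₄ - sptEuc lB k₁ k₂ k₃ lam (magEucMul lB g₁ g₂) g₃ g₄ +
        sptEuc lB k₁ k₂ k₃ lam g₁ (magEucMul lB g₂ g₃) g₄ -
        sptEuc lB k₁ k₂ k₃ lam g₁ g₂ (magEucMul lB g₃ g₄) +
        sptEuc lB k₁ k₂ k₃ lam g₁ g₂ g₃) := by
    rw [AddCircle.coe_add, AddCircle.coe_sub, AddCircle.coe_add, AddCircle.coe_sub]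
  rw [key, p1 g₁ g₂ g₃ g₄, hN]
  exact (AddCircle.coe_eq_zero_iff _).mpr ⟨N, by simp⟩
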